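/- Let P be the orthogonal projection of L²(S¹) onto the Hardy space H² (the closed span of {e_n : n ≥ 0} in the trigonometric basis), and let u₀(z) = z be the standard unitary in C(S¹). Then the Toeplitz operator T_{u₀} = P·M_{u₀}·P, viewed as an operator on H², is a Fredholm operator of index -1. -/

import Mathlib

open scoped ENNReal

/-- The standard orthonormal basis vector `e_n` of `ℓ²(ℤ)`; under the Fourier identification
`L²(S¹) ≅ ℓ²(ℤ)` it corresponds to `e_n(θ) = e^{2πinθ}`. -/
noncomputable def eBasis (n : ℤ) : lp (fun _ : ℤ => ℂ) 2 := lp.single 2 n (1 : ℂ)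

/-- The Hardy space `H²`: the closed span of `{e_n : n ≥ 0}` in `ℓ²(ℤ) ≅ L²(S¹)`. -/
noncomputable def hardySubmodule : Submodule ℂ (lp (fun _ : ℤ => ℂ) 2) :=
  (Submodule.span ℂ {x | ∃ n : ℤ, 0 ≤ n ∧ x = eBasis n}).topologicalClosure

namespace ToepAux

noncomputable abbrev H := lp (fun _ : ℤ => ℂ) 2

lemma twoReal : (0:ℝ) < (2 : ℝ≥0∞).toReal := by norm_num

lemma twoNeTop : (2 : ℝ≥0∞) ≠ ⊤ := by norm_num

lemma memℓp_shift (k : ℤ) (x : H) : Memℓp (fun n : ℤ => x (n + k)) 2 := by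
  apply memℓp_gen
  exact ((Equiv.addRight k).summable_iff
    (f := fun i : ℤ => ‖x i‖ ^ (2 : ℝ≥0∞).toReal)).2 ((lp.memℓp x).summable twoReal)

noncomputable def shiftFun (k : ℤ) (x : H) : H := ⟨fun n => x (n + k), memℓp_shift k x⟩

@[simp] lemma shiftFun_apply (k : ℤ) (x : H) (n : ℤ) : shiftFun k x n = x (n + k) := rfl

lemma norm_shiftFun (k : ℤ) (x : H) : ‖shiftFun k x‖ = ‖x‖ := by
  rw [lp.norm_eq_tsum_rpow twoReal, lp.norm_eq_tsum_rpow twoReal]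
  congr 1
  exact (Equiv.addRight k).tsum_eq (fun i : ℤ => ‖x i‖ ^ (2 : ℝ≥0∞).toReal)

noncomputable def shiftLM (k : ℤ) : H →ₗ[ℂ] H where
  toFun := shiftFun k
  map_add' a b := by
    apply lp.ext; funext n
    simp [shiftFun, lp.coeFn_add, Pi.add_apply]; rfl
  map_smul' c a := by
    apply lp.ext; funext n
    simp [shiftFun, lp.coeFn_smul, Pi.smul_apply]

noncomputable def shiftCLM (k : ℤ) : H →L[ℂ] H :=
  LinearMap.mkContinuous (shiftLM k) 1 (fun x => by
    rw [one_mul]; exact le_of_eq (norm_shiftFun k x))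

@[simp] lemma shiftCLM_apply (k : ℤ) (x : H) (n : ℤ) : shiftCLM k x n = x (n + k) := rfl

lemma norm_shiftCLM (k : ℤ) (x : H) : ‖shiftCLM k x‖ = ‖x‖ := norm_shiftFun k x

lemma dense_span_eBasis :
    Dense ((Submodule.span ℂ (Set.range eBasis) : Submodule ℂ H) : Set H) := by
  intro f
  have h := lp.hasSum_single twoNeTop f
  refine mem_closure_of_tendsto h (Filter.Eventually.of_forall fun s => ?_)
  refine Submodule.sum_mem _ fun i _ => ?_
  have : lp.single 2 i (f i) = f i • eBasis i := by
    rw [eBasis, ← lp.single_smul]; norm_num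
  rw [this]
  exact Submodule.smul_mem _ _ (Submodule.subset_span ⟨i, rfl⟩)

noncomputable def evalCLM (n : ℤ) : H →L[ℂ] ℂ :=
  LinearMap.mkContinuous
    { toFun := fun x => x n
      map_add' := fun a b => by simp only [lp.coeFn_add, Pi.add_apply]
      map_smul' := fun c a => by
        simp only [lp.coeFn_smul, Pi.smul_apply, RingHom.id_apply, smul_eq_mul] }
    1 (fun x => by rw [one_mul]; exact lp.norm_apply_le_norm two_ne_zero x n)

@[simp] lemma evalCLM_apply (n : ℤ) (x : H) : evalCLM n x = x n := rfl

noncomputable def negSet : Submodule ℂ H where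
  carrier := {x | ∀ n : ℤ, n < 0 → x n = 0}
  add_mem' := fun {a b} ha hb n hn => by
    rw [lp.coeFn_add, Pi.add_apply, ha n hn, hb n hn, add_zero]
  zero_mem' := fun n _ => by rw [lp.coeFn_zero]; rfl
  smul_mem' := fun c a ha n hn => by
    rw [lp.coeFn_smul, Pi.smul_apply, ha n hn, smul_zero]

lemma isClosed_negSet : IsClosed ((negSet : Submodule ℂ H) : Set H) := by
  have : ((negSet : Submodule ℂ H) : Set H) =
      ⋂ n ∈ {m : ℤ | m < 0}, (evalCLM n) ⁻¹' {0} := by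
    ext x
    simp only [Set.mem_iInter, Set.mem_preimage, Set.mem_singleton_iff, evalCLM_apply]
    rfl
  rw [this]
  exact isClosed_biInter fun n _ => (isClosed_singleton).preimage (evalCLM n).continuous

lemma eBasis_apply (n m : ℤ) : (eBasis n : ∀ _ : ℤ, ℂ) m = if m = n then 1 else 0 := by
  rw [eBasis, lp.single_apply]
  by_cases h : m = n <;> simp [h]

lemma mem_hardy_iff (x : H) : x ∈ hardySubmodule ↔ ∀ n : ℤ, n < 0 → x n = 0 := by
  constructor
  · intro hx
    have hsub : hardySubmodule ≤ negSet := by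
      apply Submodule.topologicalClosure_minimal _ _ isClosed_negSet
      rw [Submodule.span_le]
      rintro y ⟨m, hm, rfl⟩ n hn
      rw [eBasis_apply, if_neg (by omega)]
    exact hsub hx
  · intro hx
    have h := lp.hasSum_single twoNeTop x
    have hmem : x ∈ closure ((Submodule.span ℂ
        {y : H | ∃ n : ℤ, 0 ≤ n ∧ y = eBasis n}) : Set H) := by
      refine mem_closure_of_tendsto h (Filter.Eventually.of_forall fun s => ?_)
      refine Submodule.sum_mem _ fun i _ => ?_
      by_cases hi : 0 ≤ i
      · have : lp.single 2 i (x i) = x i • eBasis i := by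
          rw [eBasis, ← lp.single_smul]; norm_num
        rw [this]
        exact Submodule.smul_mem _ _ (Submodule.subset_span ⟨i, hi, rfl⟩)
      · have : x i = 0 := hx i (by omega)
        have h0 : lp.single 2 i (x i) = (0 : H) := by
          apply lp.ext; funext m
          rw [this, lp.coeFn_zero]
          by_cases hm : m = i <;> simp [lp.single_apply, hm]
        rw [h0]
        exact Submodule.zero_mem _
    rw [hardySubmodule, ← SetLike.mem_coe, Submodule.topologicalClosure_coe]
    exact hmem

end ToepAux

open ToepAux in
/-- Let `P` be the orthogonal projection of `L²(S¹)` onto the Hardy space `H²` and let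
`M` be multiplication by the standard unitary `u₀(z) = z`, i.e. `M e_n = e_{n+1}` in the
trigonometric basis.  Then the Toeplitz operator `T_{u₀} = P M P`, viewed as an operator on
`H²`, is Fredholm of index `-1`: it has closed range, trivial (zero-dimensional) kernel, and
finite, one-dimensional cokernel, so `Index(T_{u₀}) = dim ker - dim coker = -1 = -Wind(u₀)`. -/
theorem toeplitz_shift_fredholm_index_neg_one
    (M P : lp (fun _ : ℤ => ℂ) 2 →L[ℂ] lp (fun _ : ℤ => ℂ) 2)
    (hM : ∀ n : ℤ, M (eBasis n) = eBasis (n + 1))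
    -- `P` is the orthogonal projection onto `H²`
    (hPsa : IsSelfAdjoint P)
    (hPidem : ∀ x, P (P x) = P x)
    (hPmem : ∀ x, P x ∈ hardySubmodule)
    (hPfix : ∀ x ∈ hardySubmodule, P x = x)
    -- the Toeplitz operator `T = P M P` on `H²`
    (T : hardySubmodule →L[ℂ] hardySubmodule)
    (hT : ∀ x : hardySubmodule, (T x : lp (fun _ : ℤ => ℂ) 2) = P (M x)) :
    IsClosed (LinearMap.range (T : hardySubmodule →ₗ[ℂ] hardySubmodule) :
        Set hardySubmodule) ∧
    Module.finrank ℂ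
      (LinearMap.ker (T : hardySubmodule →ₗ[ℂ] hardySubmodule)) = 0 ∧
    FiniteDimensional ℂ
      (hardySubmodule ⧸ LinearMap.range (T : hardySubmodule →ₗ[ℂ] hardySubmodule)) ∧
    Module.finrank ℂ
      (hardySubmodule ⧸ LinearMap.range (T : hardySubmodule →ₗ[ℂ] hardySubmodule)) = 1 ∧
    (Module.finrank ℂ
        (LinearMap.ker (T : hardySubmodule →ₗ[ℂ] hardySubmodule)) : ℤ) -
      (Module.finrank ℂ
        (hardySubmodule ⧸ LinearMap.range (T : hardySubmodule →ₗ[ℂ] hardySubmodule)) : ℤ)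
      = -1 := by
  classical
  -- `M` is the bilateral shift
  have hMS : M = shiftCLM (-1) := by
    apply ContinuousLinearMap.ext_on dense_span_eBasis
    rintro _ ⟨n, rfl⟩
    rw [hM]
    apply lp.ext; funext m
    show (eBasis (n + 1) : ∀ _ : ℤ, ℂ) m = (eBasis n : ∀ _ : ℤ, ℂ) (m + (-1))
    rw [eBasis_apply, eBasis_apply]
    by_cases h : m = n + 1
    · rw [if_pos h, if_pos (by omega)]
    · rw [if_neg h, if_neg (by omega)]
  have hMapp : ∀ (x : H) (m : ℤ), M x m = x (m + (-1)) := by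
    intro x m; rw [hMS]; rfl
  have hMnorm : ∀ x : H, ‖M x‖ = ‖x‖ := by
    intro x; rw [hMS]; exact norm_shiftCLM (-1) x
  have hMmem : ∀ x : H, x ∈ hardySubmodule → M x ∈ hardySubmodule := by
    intro x hx
    rw [mem_hardy_iff] at hx ⊢
    intro n hn
    rw [hMapp]
    exact hx _ (by omega)
  have hTM : ∀ x : hardySubmodule, (T x : H) = M (x : H) := by
    intro x
    rw [hT x]
    exact hPfix _ (hMmem _ x.2)
  -- kernel is trivial
  have hker : LinearMap.ker (T : hardySubmodule →ₗ[ℂ] hardySubmodule) = ⊥ := by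
    rw [LinearMap.ker_eq_bot']
    intro x hx
    have h1 : T x = 0 := hx
    have h2 : M (x : H) = 0 := by
      rw [← hTM x, h1]; rfl
    have h3 : ‖(x : H)‖ = 0 := by rw [← hMnorm, h2, norm_zero]
    exact Subtype.ext (norm_eq_zero.mp h3)
  -- the linear functional `y ↦ y 0` on `H²`
  set φ : hardySubmodule →ₗ[ℂ] ℂ :=
    (evalCLM 0).toLinearMap.comp (hardySubmodule.subtype) with hφ
  have hφapp : ∀ y : hardySubmodule, φ y = (y : H) 0 := fun _ => rfl
  -- the range of T is the kernel of φ
  have hrange : LinearMap.range (T : hardySubmodule →ₗ[ℂ] hardySubmodule)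
      = LinearMap.ker φ := by
    apply le_antisymm
    · rintro _ ⟨x, rfl⟩
      have : (T x : H) 0 = 0 := by
        rw [hTM x, hMapp]
        exact (mem_hardy_iff _).1 x.2 (0 + (-1)) (by norm_num)
      simpa [LinearMap.mem_ker, hφapp] using this
    · intro y hy
      have hy0 : (y : H) 0 = 0 := hy
      have hymem := (mem_hardy_iff (y : H)).1 y.2
      have hxmem : shiftFun 1 (y : H) ∈ hardySubmodule := by
        rw [mem_hardy_iff]
        intro n hn
        rw [shiftFun_apply]
        rcases lt_or_eq_of_le (by omega : n + 1 ≤ 0) with h | h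
        · exact hymem _ h
        · rw [h, hy0]
      refine ⟨⟨shiftFun 1 (y : H), hxmem⟩, ?_⟩
      apply Subtype.ext
      show (T _ : H) = (y : H)
      rw [hTM]
      apply lp.ext; funext m
      show M _ m = (y : H) m
      rw [hMapp]
      have hm : m + (-1) + 1 = m := by omega
      rw [shiftFun_apply, hm]
  -- closed range
  have hclosed : IsClosed
      (LinearMap.range (T : hardySubmodule →ₗ[ℂ] hardySubmodule) : Set hardySubmodule) := by
    rw [hrange]
    have : (LinearMap.ker φ : Set hardySubmodule) =
        (fun y : hardySubmodule => evalCLM 0 (y : H)) ⁻¹' {0} := rfl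
    rw [this]
    exact isClosed_singleton.preimage
      ((evalCLM 0).continuous.comp continuous_subtype_val)
  -- φ is surjective
  have he0 : (eBasis 0 : H) ∈ hardySubmodule := by
    rw [mem_hardy_iff]
    intro n hn
    rw [eBasis_apply, if_neg (by omega)]
  have hsurj : Function.Surjective φ := by
    intro c
    refine ⟨c • ⟨eBasis 0, he0⟩, ?_⟩
    rw [hφapp]
    show (((c • (⟨eBasis 0, he0⟩ : hardySubmodule)) : hardySubmodule) : H) 0 = c
    rw [Submodule.coe_smul, lp.coeFn_smul, Pi.smul_apply, eBasis_apply, if_pos rfl,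
      smul_eq_mul, mul_one]
  -- the cokernel is 1-dimensional
  have e := LinearMap.quotKerEquivOfSurjective φ hsurj
  rw [hrange] at hclosed
  rw [hrange, hker]
  have hfd : FiniteDimensional ℂ (hardySubmodule ⧸ LinearMap.ker φ) :=
    Module.Finite.equiv e.symm
  have hfr : Module.finrank ℂ (hardySubmodule ⧸ LinearMap.ker φ) = 1 := by
    rw [e.finrank_eq, Module.finrank_self]
  refine ⟨hclosed, ?_, hfd, hfr, ?_⟩
  · simp
  · rw [hfr]
    simp
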